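/- arXiv:1005.2769 — 4 statements merged into one kernel-verified Lean document; each statement's English description precedes it below -/
import Mathlib

section
/- Let Φ be a root system of a finite Weyl group W, and let α₁,...,α_k ∈ Φ. The product of reflections s_{α₁}s_{α₂}⋯s_{α_k} has Carter length exactly k (i.e., it cannot be written as a product of fewer than k reflections in W) if and only if the roots α₁,...,α_k are linearly independent. -/
open scoped RealInnerProductSpace

/-- Reflection in the hyperplane orthogonal to the root `γ`, as a self-map of `V`. -/
noncomputable def sRefl {V : Type*} [NormedAddCommGroup V] [InnerProductSpace ℝ V]
    (γ : V) : Function.End V :=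
  fun x => x - (2 * ⟪x, γ⟫ / ⟪γ, γ⟫) • γ

/-- `Φ` is a root system in the Euclidean space `V`. -/
structure IsRootSystem {V : Type*} [NormedAddCommGroup V] [InnerProductSpace ℝ V]
    (Φ : Set V) : Prop where
  finite : Φ.Finite
  zero_not_mem : (0 : V) ∉ Φ
  span_top : Submodule.span ℝ Φ = ⊤
  neg_mem : ∀ α ∈ Φ, -α ∈ Φ
  refl_mem : ∀ α ∈ Φ, ∀ β ∈ Φ, sRefl α β ∈ Φ
  integral : ∀ α ∈ Φ, ∀ β ∈ Φ, ∃ n : ℤ, 2 * ⟪β, α⟫ / ⟪α, α⟫ = (n : ℝ)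
namespace CarterAux
variable {V : Type*} [NormedAddCommGroup V] [InnerProductSpace ℝ V]

lemma sRefl_apply (γ x : V) : sRefl γ x = x - (2 * ⟪x, γ⟫ / ⟪γ, γ⟫) • γ := rfl

lemma sRefl_zero : sRefl (0 : V) = id := by
  funext x; simp [sRefl_apply]

lemma sRefl_of_inner_zero {γ x : V} (h : ⟪x, γ⟫ = 0) : sRefl γ x = x := by
  simp [sRefl_apply, h]

lemma sRefl_self {γ : V} (hγ : γ ≠ 0) : sRefl γ γ = -γ := by
  have hq : ⟪γ, γ⟫ ≠ 0 := fun h => hγ (inner_self_eq_zero.mp h)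
  rw [sRefl_apply]
  rw [mul_div_assoc, div_self hq]
  module

lemma sRefl_inner (γ x y : V) : ⟪sRefl γ x, sRefl γ y⟫ = ⟪x, y⟫ := by
  rcases eq_or_ne γ 0 with rfl | hγ
  · simp [sRefl_zero]
  have hq : ⟪γ, γ⟫ ≠ 0 := fun h => hγ (inner_self_eq_zero.mp h)
  rw [sRefl_apply, sRefl_apply, inner_sub_left, inner_sub_right, inner_sub_right,
    real_inner_smul_left, real_inner_smul_left, real_inner_smul_right,
    real_inner_smul_right]
  rw [real_inner_comm γ y, real_inner_comm γ x]
  field_simp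
  ring

lemma sRefl_sRefl (γ x : V) : sRefl γ (sRefl γ x) = x := by
  rcases eq_or_ne γ 0 with rfl | hγ
  · simp [sRefl_zero]
  have hq : ⟪γ, γ⟫ ≠ 0 := fun h => hγ (inner_self_eq_zero.mp h)
  have h1 : ⟪sRefl γ x, γ⟫ = -⟪x, γ⟫ := by
    have := sRefl_inner γ x γ
    rw [sRefl_self hγ, inner_neg_right] at this
    linarith
  rw [sRefl_apply (x := sRefl γ x), h1, sRefl_apply]
  rw [mul_neg, neg_div, neg_smul]
  abel

lemma sRefl_add (γ x y : V) : sRefl γ (x + y) = sRefl γ x + sRefl γ y := by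
  rw [sRefl_apply, sRefl_apply, sRefl_apply, inner_add_left]
  rw [mul_add, add_div, add_smul]
  abel

lemma sRefl_smul (γ : V) (r : ℝ) (x : V) : sRefl γ (r • x) = r • sRefl γ x := by
  rw [sRefl_apply, sRefl_apply, real_inner_smul_left, smul_sub, smul_smul]
  ring_nf

lemma sRefl_neg_pt (γ x : V) : sRefl γ (-x) = -(sRefl γ x) := by
  have := sRefl_smul γ (-1) x
  simpa using this

lemma sRefl_sub (γ x y : V) : sRefl γ (x - y) = sRefl γ x - sRefl γ y := by
  rw [sub_eq_add_neg, sRefl_add, sRefl_neg_pt, sub_eq_add_neg]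

lemma sRefl_smul_root {γ : V} {r : ℝ} (hr : r ≠ 0) : sRefl (r • γ) = sRefl γ := by
  funext x
  rcases eq_or_ne γ 0 with rfl | hγ
  · simp [sRefl_zero]
  have hq : ⟪γ, γ⟫ ≠ 0 := fun h => hγ (inner_self_eq_zero.mp h)
  have hc : 2 * ⟪x, r • γ⟫ / ⟪r • γ, r • γ⟫ * r = 2 * ⟪x, γ⟫ / ⟪γ, γ⟫ := by
    rw [real_inner_smul_right, real_inner_smul_left, real_inner_smul_right]
    field_simp
  rw [sRefl_apply, sRefl_apply, smul_smul, hc]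

lemma sRefl_neg_root (γ : V) : sRefl (-γ) = sRefl γ := by
  have : (-1 : ℝ) • γ = -γ := by simp
  rw [← this, sRefl_smul_root (by norm_num)]

lemma sRefl_selfadj (γ x y : V) : ⟪sRefl γ x, y⟫ = ⟪x, sRefl γ y⟫ := by
  conv_lhs => rw [← sRefl_sRefl γ y]
  rw [sRefl_inner]

lemma sRefl_conj (γ δ x : V) :
    sRefl γ (sRefl δ (sRefl γ x)) = sRefl (sRefl γ δ) x := by
  have hQ : ⟪sRefl γ δ, sRefl γ δ⟫ = ⟪δ, δ⟫ := sRefl_inner γ δ δ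
  have hx : ⟪x, sRefl γ δ⟫ = ⟪sRefl γ x, δ⟫ := (sRefl_selfadj γ x δ).symm.trans rfl
  rw [sRefl_apply (γ := sRefl γ δ), hQ, hx]
  rw [sRefl_apply (γ := δ) (x := sRefl γ x), sRefl_sub, sRefl_smul]
  rw [sRefl_sRefl]

end CarterAux
noncomputable section
namespace CarterAux
variable {V : Type*} [NormedAddCommGroup V] [InnerProductSpace ℝ V]

/-- product of the reflections along a list of roots -/
noncomputable def wp (L : List V) : V → V := ((L.map sRefl).prod : Function.End V)

@[simp] lemma wp_nil : wp ([] : List V) = id := rfl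

@[simp] lemma wp_cons (a : V) (L : List V) (x : V) :
    wp (a :: L) x = sRefl a (wp L x) := by
  simp only [wp, List.map_cons, List.prod_cons]
  rfl

lemma wp_append (L M : List V) (x : V) : wp (L ++ M) x = wp L (wp M x) := by
  induction L with
  | nil => simp
  | cons a l ih => simp [ih]

lemma wp_mem {Φ : Set V} (hrefl : ∀ α ∈ Φ, ∀ β ∈ Φ, sRefl α β ∈ Φ)
    {L : List V} (hL : ∀ γ ∈ L, γ ∈ Φ) {x : V} (hx : x ∈ Φ) : wp L x ∈ Φ := by
  induction L with
  | nil => exact hx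
  | cons a l ih =>
      rw [wp_cons]
      exact hrefl a (hL a (by simp)) _ (ih (fun γ hγ => hL γ (by simp [hγ])))

lemma wp_inner (L : List V) (x y : V) : ⟪wp L x, wp L y⟫ = ⟪x, y⟫ := by
  induction L with
  | nil => rfl
  | cons a l ih => rw [wp_cons, wp_cons, sRefl_inner, ih]

lemma wp_add (L : List V) (x y : V) : wp L (x + y) = wp L x + wp L y := by
  induction L with
  | nil => rfl
  | cons a l ih => rw [wp_cons, wp_cons, wp_cons, ih, sRefl_add]

lemma wp_smul (L : List V) (r : ℝ) (x : V) : wp L (r • x) = r • wp L x := by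
  induction L with
  | nil => rfl
  | cons a l ih => rw [wp_cons, wp_cons, ih, sRefl_smul]

lemma wp_neg (L : List V) (x : V) : wp L (-x) = -(wp L x) := by
  have := wp_smul L (-1) x; simpa using this

lemma wp_reverse_apply (L : List V) (x : V) : wp L.reverse (wp L x) = x := by
  induction L generalizing x with
  | nil => rfl
  | cons a l ih =>
      rw [wp_cons, List.reverse_cons, wp_append]
      have : wp [a] (sRefl a (wp l x)) = wp l x := by
        simp only [wp_cons, wp_nil, id_eq]
        exact sRefl_sRefl a (wp l x)
      rw [this, ih]

lemma wp_apply_reverse (L : List V) (x : V) : wp L (wp L.reverse x) = x := by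
  have := wp_reverse_apply L.reverse x
  rwa [List.reverse_reverse] at this

lemma wp_conj (L : List V) (a x : V) :
    sRefl (wp L a) x = wp L (sRefl a (wp L.reverse x)) := by
  induction L generalizing x with
  | nil => rfl
  | cons b l ih =>
      rw [wp_cons, List.reverse_cons, wp_append]
      have h1 : ∀ y : V, wp [b] y = sRefl b y := fun y => by
        simp only [wp_cons, wp_nil, id_eq]
      rw [h1, ← sRefl_conj b (wp l a) x, ih]
      rw [wp_cons]

lemma wp_fix_of_inner_zero {L : List V} {x : V} (h : ∀ γ ∈ L, ⟪x, γ⟫ = 0) :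
    wp L x = x := by
  induction L with
  | nil => rfl
  | cons a l ih =>
      rw [wp_cons, ih (fun γ hγ => h γ (by simp [hγ]))]
      exact sRefl_of_inner_zero (h a (by simp))

lemma wp_inj {L : List V} {x y : V} (h : wp L x = wp L y) : x = y := by
  have := congrArg (wp L.reverse) h
  rwa [wp_reverse_apply, wp_reverse_apply] at this

end CarterAux
namespace CarterAux
variable {V : Type*} [NormedAddCommGroup V] [InnerProductSpace ℝ V]

lemma inner_self_pos' {x : V} (hx : x ≠ 0) : (0:ℝ) < ⟪x, x⟫ :=
  lt_of_le_of_ne real_inner_self_nonneg (fun h => hx (inner_self_eq_zero.mp h.symm))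

/-- strict Cauchy-Schwarz for non-parallel vectors -/
lemma cs_strict {α β : V} (hβ : β ≠ 0) (h : ∀ r : ℝ, α ≠ r • β) :
    ⟪α, β⟫ ^ 2 < ⟪α, α⟫ * ⟪β, β⟫ := by
  have hQβ : (0:ℝ) < ⟪β, β⟫ := inner_self_pos' hβ
  have hQβ' : ⟪β, β⟫ ≠ 0 := ne_of_gt hQβ
  set r : ℝ := ⟪α, β⟫ / ⟪β, β⟫ with hr
  have hne : α - r • β ≠ 0 := fun h0 => h r (by rw [← sub_eq_zero]; exact h0)
  have hpos : (0:ℝ) < ⟪α - r • β, α - r • β⟫ := inner_self_pos' hne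
  have expand : ⟪α - r • β, α - r • β⟫
      = ⟪α, α⟫ - 2 * r * ⟪α, β⟫ + r ^ 2 * ⟪β, β⟫ := by
    rw [inner_sub_left, inner_sub_right, inner_sub_right, real_inner_smul_left,
      real_inner_smul_left, real_inner_smul_right, real_inner_smul_right,
      real_inner_comm β α]
    ring
  rw [expand, hr] at hpos
  have key : ⟪α, α⟫ - 2 * (⟪α, β⟫ / ⟪β, β⟫) * ⟪α, β⟫
      + (⟪α, β⟫ / ⟪β, β⟫) ^ 2 * ⟪β, β⟫ = ⟪α, α⟫ - ⟪α, β⟫ ^ 2 / ⟪β, β⟫ := by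
    field_simp
    ring
  rw [key] at hpos
  have : ⟪α, β⟫ ^ 2 / ⟪β, β⟫ < ⟪α, α⟫ := by linarith
  calc ⟪α, β⟫ ^ 2 = ⟪α, β⟫ ^ 2 / ⟪β, β⟫ * ⟪β, β⟫ := by field_simp
    _ < ⟪α, α⟫ * ⟪β, β⟫ := by exact mul_lt_mul_of_pos_right this hQβ

section PosSimp
open scoped Classical

variable (Φ : Set V) (hΦ : IsRootSystem Φ) (t : V)

/-- the roots, as a finset -/
noncomputable def TF : Finset V := hΦ.finite.toFinset

/-- `γ` is decomposable: a nonneg combination of positive roots of smaller height. -/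
def Dec (γ : V) : Prop :=
  ∃ c : V → ℝ, (∀ δ, 0 ≤ c δ) ∧
    (∀ δ, c δ ≠ 0 → δ ∈ Φ ∧ 0 < ⟪δ, t⟫ ∧ ⟪δ, t⟫ < ⟪γ, t⟫) ∧
    γ = ∑ δ ∈ TF Φ hΦ, c δ • δ

/-- `γ` is a simple root (w.r.t. the linear functional `⟪·, t⟫`) -/
def Simp (γ : V) : Prop := γ ∈ Φ ∧ 0 < ⟪γ, t⟫ ∧ ¬ Dec Φ hΦ t γ

variable {Φ t}

lemma mem_TF {γ : V} : γ ∈ TF Φ hΦ ↔ γ ∈ Φ := Set.Finite.mem_toFinset _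

lemma single_rep {γ : V} (hγ : γ ∈ Φ) :
    γ = ∑ δ ∈ TF Φ hΦ, (if δ = γ then (1:ℝ) else 0) • δ := by
  rw [Finset.sum_eq_single γ]
  · simp
  · intro b _ hb; simp [hb]
  · intro hγT; exact absurd ((mem_TF hΦ).mpr hγ) hγT

/-- every positive root is a nonneg combination of simple roots -/
lemma exists_simp_rep : ∀ γ ∈ Φ, 0 < ⟪γ, t⟫ →
    ∃ c : V → ℝ, (∀ δ, 0 ≤ c δ) ∧ (∀ δ, c δ ≠ 0 → Simp Φ hΦ t δ) ∧
      γ = ∑ δ ∈ TF Φ hΦ, c δ • δ := by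
  classical
  suffices H : ∀ n : ℕ, ∀ γ ∈ Φ, 0 < ⟪γ, t⟫ →
      ((TF Φ hΦ).filter (fun δ => 0 < ⟪δ, t⟫ ∧ ⟪δ, t⟫ < ⟪γ, t⟫)).card ≤ n →
      ∃ c : V → ℝ, (∀ δ, 0 ≤ c δ) ∧ (∀ δ, c δ ≠ 0 → Simp Φ hΦ t δ) ∧
        γ = ∑ δ ∈ TF Φ hΦ, c δ • δ by
    intro γ hγ hpos
    exact H _ γ hγ hpos le_rfl
  intro n
  induction n with
  | zero =>
      intro γ hγ hpos hcard
      refine ⟨fun y => if y = γ then 1 else 0, fun δ => by positivity, ?_, single_rep hΦ hγ⟩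
      intro δ hδ
      rcases eq_or_ne δ γ with rfl | hne
      swap
      · simp [hne] at hδ
      refine ⟨hγ, hpos, ?_⟩
      rintro ⟨c, hc0, hsupp, hsum⟩
      have hall : ∀ y ∈ TF Φ hΦ, c y • y = 0 := by
        intro y hyT
        rcases eq_or_ne (c y) 0 with h | h
        · simp [h]
        · exfalso
          obtain ⟨hyΦ, h1, h2⟩ := hsupp y h
          have hmem : y ∈ (TF Φ hΦ).filter (fun z => 0 < ⟪z, t⟫ ∧ ⟪z, t⟫ < ⟪δ, t⟫) := by
            simp [Finset.mem_filter, hyT, h1, h2]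
          rw [Finset.card_eq_zero.mp (Nat.le_zero.mp hcard)] at hmem
          simp at hmem
      have hzero : δ = 0 := by rw [hsum]; exact Finset.sum_eq_zero hall
      rw [hzero] at hpos
      simp at hpos
  | succ n ih =>
      intro γ hγ hpos hcard
      by_cases hdec : Dec Φ hΦ t γ
      · obtain ⟨c, hc0, hsupp, hsum⟩ := hdec
        have IH : ∀ δ, c δ ≠ 0 →
            ∃ c' : V → ℝ, (∀ y, 0 ≤ c' y) ∧ (∀ y, c' y ≠ 0 → Simp Φ hΦ t y) ∧
              δ = ∑ y ∈ TF Φ hΦ, c' y • y := by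
          intro δ hδ
          obtain ⟨hδΦ, h1, h2⟩ := hsupp δ hδ
          refine ih δ hδΦ h1 ?_
          have hsub : (TF Φ hΦ).filter (fun y => 0 < ⟪y, t⟫ ∧ ⟪y, t⟫ < ⟪δ, t⟫) ⊂
              (TF Φ hΦ).filter (fun y => 0 < ⟪y, t⟫ ∧ ⟪y, t⟫ < ⟪γ, t⟫) := by
            refine Finset.ssubset_iff_of_subset ?_ |>.mpr ?_
            · intro y hy
              simp only [Finset.mem_filter] at hy ⊢
              exact ⟨hy.1, hy.2.1, lt_trans hy.2.2 h2⟩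
            · exact ⟨δ, by simp [Finset.mem_filter, (mem_TF hΦ).mpr hδΦ, h1, h2],
                by simp [Finset.mem_filter]⟩
          have := Finset.card_lt_card hsub
          omega
        choose! c' hc'0 hc'supp hc'sum using IH
        refine ⟨fun y => ∑ δ ∈ TF Φ hΦ, c δ * c' δ y, ?_, ?_, ?_⟩
        · intro y
          refine Finset.sum_nonneg fun δ _ => ?_
          rcases eq_or_ne (c δ) 0 with h | h
          · simp [h]
          · exact mul_nonneg (hc0 δ) (hc'0 δ h y)
        · intro y hy
          have : ∃ δ ∈ TF Φ hΦ, c δ * c' δ y ≠ 0 := by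
            by_contra hno
            push_neg at hno
            exact hy (Finset.sum_eq_zero hno)
          obtain ⟨δ, _, hne⟩ := this
          have hcδ : c δ ≠ 0 := fun h => hne (by simp [h])
          have hc'y : c' δ y ≠ 0 := fun h => hne (by simp [h])
          exact hc'supp δ hcδ y hc'y
        · have e1 : ∑ y ∈ TF Φ hΦ, (∑ δ ∈ TF Φ hΦ, c δ * c' δ y) • y
              = ∑ y ∈ TF Φ hΦ, ∑ δ ∈ TF Φ hΦ, (c δ * c' δ y) • y :=
            Finset.sum_congr rfl fun y _ => Finset.sum_smul
          have e2 : ∑ y ∈ TF Φ hΦ, ∑ δ ∈ TF Φ hΦ, (c δ * c' δ y) • y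
              = ∑ δ ∈ TF Φ hΦ, ∑ y ∈ TF Φ hΦ, (c δ * c' δ y) • y := Finset.sum_comm
          have e3 : ∀ δ ∈ TF Φ hΦ, (∑ y ∈ TF Φ hΦ, (c δ * c' δ y) • y) = c δ • δ := by
            intro δ _
            rcases eq_or_ne (c δ) 0 with h | h
            · simp [h]
            · have e4 : (∑ y ∈ TF Φ hΦ, (c δ * c' δ y) • y)
                  = c δ • ∑ y ∈ TF Φ hΦ, c' δ y • y := by
                rw [Finset.smul_sum]
                exact Finset.sum_congr rfl fun y _ => (smul_smul _ _ _).symm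
              rw [e4, ← hc'sum δ h]
          rw [hsum]
          exact (e1.trans (e2.trans (Finset.sum_congr rfl e3))).symm
      · refine ⟨fun y => if y = γ then 1 else 0, fun δ => by positivity, ?_, single_rep hΦ hγ⟩
        intro δ hδ
        rcases eq_or_ne δ γ with rfl | hne
        swap
        · simp [hne] at hδ
        exact ⟨hγ, hpos, hdec⟩

end PosSimp
end CarterAux
namespace CarterAux
variable {V : Type*} [NormedAddCommGroup V] [InnerProductSpace ℝ V]

section PosSimp2
open scoped Classical

variable {Φ : Set V} {t : V}

lemma root_ne_zero (hΦ : IsRootSystem Φ) {γ : V} (hγ : γ ∈ Φ) : γ ≠ 0 :=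
  fun h => hΦ.zero_not_mem (h ▸ hγ)

lemma root_inner_pos (hΦ : IsRootSystem Φ) {γ : V} (hγ : γ ∈ Φ) : (0:ℝ) < ⟪γ, γ⟫ :=
  inner_self_pos' (root_ne_zero hΦ hγ)

lemma ind_sum (hΦ : IsRootSystem Φ) {γ : V} (hγ : γ ∈ Φ) (r : ℝ) :
    ∑ δ ∈ TF Φ hΦ, (if δ = γ then r else 0) • δ = r • γ := by
  rw [Finset.sum_eq_single γ]
  · simp
  · intro b _ hb; simp [hb]
  · intro hγT; exact absurd ((mem_TF hΦ).mpr hγ) hγT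

/-- helper: two distinct simple roots with Cartan integer 1 are impossible -/
lemma simp_H (hΦ : IsRootSystem Φ) (hgen : ∀ γ ∈ Φ, ⟪γ, t⟫ ≠ 0) {α β : V}
    (hsα : Simp Φ hΦ t α) (hsβ : Simp Φ hΦ t β)
    (hαβ : α ≠ β) (hc : 2 * ⟪α, β⟫ = ⟪β, β⟫) : False := by
  obtain ⟨hαΦ, hαpos, hαnd⟩ := hsα
  obtain ⟨hβΦ, hβpos, hβnd⟩ := hsβ
  have hQβ : ⟪β, β⟫ ≠ 0 := ne_of_gt (root_inner_pos hΦ hβΦ)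
  have hδΦ : α - β ∈ Φ := by
    have h := hΦ.refl_mem β hβΦ α hαΦ
    rw [sRefl_apply, hc, div_self hQβ, one_smul] at h
    exact h
  have hδ0 : α - β ≠ 0 := sub_ne_zero.mpr hαβ
  have hδne : ⟪α - β, t⟫ ≠ 0 := hgen _ hδΦ
  have hht : ⟪α - β, t⟫ = ⟪α, t⟫ - ⟪β, t⟫ := inner_sub_left _ _ _
  rcases lt_or_gt_of_ne hδne with hneg | hpos
  · -- β - α is a positive root, β = α + (β - α) decomposes β
    have hηΦ : β - α ∈ Φ := by
      have := hΦ.neg_mem _ hδΦ; rwa [neg_sub] at this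
    have hηht : 0 < ⟪β - α, t⟫ := by rw [inner_sub_left]; rw [hht] at hneg; linarith
    refine hβnd ⟨fun y => (if y = α then 1 else 0) + (if y = β - α then 1 else 0),
      fun δ => by positivity, ?_, ?_⟩
    · intro δ hδ
      rcases eq_or_ne δ α with rfl | h1
      · refine ⟨hαΦ, hαpos, ?_⟩
        have h2 := hηht
        rw [inner_sub_left] at h2
        linarith
      rcases eq_or_ne δ (β - α) with rfl | h2
      · refine ⟨hηΦ, hηht, ?_⟩
        rw [inner_sub_left]
        linarith
      · simp [h1, h2] at hδ
    · rw [Finset.sum_congr rfl (fun y (_ : y ∈ TF Φ hΦ) => add_smul _ _ y),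
        Finset.sum_add_distrib, ind_sum hΦ hαΦ, ind_sum hΦ hηΦ]
      module
  · -- α - β is a positive root, α = (α - β) + β decomposes α
    refine hαnd ⟨fun y => (if y = α - β then 1 else 0) + (if y = β then 1 else 0),
      fun δ => by positivity, ?_, ?_⟩
    · intro δ hδ
      rcases eq_or_ne δ (α - β) with rfl | h1
      · refine ⟨hδΦ, hpos, ?_⟩
        rw [hht] at hpos ⊢
        linarith
      rcases eq_or_ne δ β with rfl | h2
      · refine ⟨hβΦ, hβpos, ?_⟩
        rw [hht] at hpos
        linarith
      · simp [h1, h2] at hδ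
    · rw [Finset.sum_congr rfl (fun y (_ : y ∈ TF Φ hΦ) => add_smul _ _ y),
        Finset.sum_add_distrib, ind_sum hΦ hδΦ, ind_sum hΦ hβΦ]
      module

/-- distinct simple roots have nonpositive inner product -/
lemma simp_inner_nonpos (hΦ : IsRootSystem Φ) (hgen : ∀ γ ∈ Φ, ⟪γ, t⟫ ≠ 0) {α β : V}
    (hsα : Simp Φ hΦ t α) (hsβ : Simp Φ hΦ t β)
    (hαβ : α ≠ β) : ⟪α, β⟫ ≤ 0 := by
  by_contra hpos
  push_neg at hpos
  obtain ⟨hαΦ, hαpos, hαnd⟩ := hsα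
  obtain ⟨hβΦ, hβpos, hβnd⟩ := hsβ
  have hQα : (0:ℝ) < ⟪α, α⟫ := root_inner_pos hΦ hαΦ
  have hQβ : (0:ℝ) < ⟪β, β⟫ := root_inner_pos hΦ hβΦ
  by_cases hpar : ∃ r : ℝ, α = r • β
  · obtain ⟨r, rfl⟩ := hpar
    have hr : 0 < r := by
      rw [real_inner_smul_left] at hαpos
      by_contra h
      push_neg at h
      nlinarith
    have hrne : r ≠ 1 := fun h => hαβ (by rw [h, one_smul])
    rcases lt_or_gt_of_ne hrne with hlt | hgt
    · refine hβnd ⟨fun y => if y = r • β then r⁻¹ else 0, ?_, ?_, ?_⟩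
      · intro δ
        by_cases h : δ = r • β
        · simp only [h, if_pos rfl]; exact inv_nonneg.mpr (le_of_lt hr)
        · simp [h]
      · intro δ hδ
        rcases eq_or_ne δ (r • β) with rfl | h1
        · refine ⟨hαΦ, hαpos, ?_⟩
          rw [real_inner_smul_left]
          nlinarith
        · simp [h1] at hδ
      · rw [ind_sum hΦ hαΦ, smul_smul, inv_mul_cancel₀ (ne_of_gt hr), one_smul]
    · refine hαnd ⟨fun y => if y = β then r else 0, ?_, ?_, ?_⟩
      · intro δ
        by_cases h : δ = β
        · simp only [h, if_pos rfl]; exact le_of_lt hr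
        · simp [h]
      · intro δ hδ
        rcases eq_or_ne δ β with rfl | h1
        · refine ⟨hβΦ, hβpos, ?_⟩
          rw [real_inner_smul_left]
          nlinarith
        · simp [h1] at hδ
      · rw [ind_sum hΦ hβΦ]
  · push_neg at hpar
    obtain ⟨m, hm⟩ := hΦ.integral β hβΦ α hαΦ
    obtain ⟨n, hn⟩ := hΦ.integral α hαΦ β hβΦ
    rw [real_inner_comm α β] at hn
    -- hm : 2 * ⟪α, β⟫ / ⟪β, β⟫ = m,  hn : 2 * ⟪α, β⟫ / ⟪α, α⟫ = n
    have hm0 : (0:ℤ) < m := by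
      have : (0:ℝ) < m := by rw [← hm]; positivity
      exact_mod_cast this
    have hn0 : (0:ℤ) < n := by
      have : (0:ℝ) < n := by rw [← hn]; positivity
      exact_mod_cast this
    have hcs := cs_strict (root_ne_zero hΦ hβΦ) hpar
    have hprod : (m:ℝ) * n < 4 := by
      rw [← hm, ← hn, div_mul_div_comm, div_lt_iff₀ (by positivity)]
      nlinarith [hcs]
    have hmn : m * n ≤ 3 := by
      have : (m * n : ℤ) < 4 := by exact_mod_cast hprod
      omega
    have hone : m = 1 ∨ n = 1 := by
      by_contra h
      push_neg at h
      obtain ⟨h1, h2⟩ := h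
      have hm2 : 2 ≤ m := by omega
      have hn2 : 2 ≤ n := by omega
      nlinarith
    have hQβ' : ⟪β, β⟫ ≠ 0 := ne_of_gt hQβ
    have hQα' : ⟪α, α⟫ ≠ 0 := ne_of_gt hQα
    rcases hone with h1 | h1
    · rw [h1] at hm
      refine simp_H hΦ hgen ⟨hαΦ, hαpos, hαnd⟩ ⟨hβΦ, hβpos, hβnd⟩ hαβ ?_
      field_simp at hm
      push_cast at hm
      linarith
    · rw [h1] at hn
      refine simp_H hΦ hgen ⟨hβΦ, hβpos, hβnd⟩ ⟨hαΦ, hαpos, hαnd⟩ (Ne.symm hαβ) ?_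
      rw [real_inner_comm α β]
      field_simp at hn
      push_cast at hn
      linarith

end PosSimp2
end CarterAux
namespace CarterAux
variable {V : Type*} [NormedAddCommGroup V] [InnerProductSpace ℝ V]

section PosSimp3
open scoped Classical

variable {Φ : Set V} {t : V}

/-- linear independence of the simple roots, in the form we need -/
lemma simp_sum_eq_zero (hΦ : IsRootSystem Φ) (hgen : ∀ γ ∈ Φ, ⟪γ, t⟫ ≠ 0)
    {f : V → ℝ} (hsupp : ∀ δ, f δ ≠ 0 → Simp Φ hΦ t δ)
    (hsum : ∑ δ ∈ TF Φ hΦ, f δ • δ = 0) : ∀ δ, f δ = 0 := by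
  set T := TF Φ hΦ with hT
  set P := T.filter (fun δ => 0 < f δ) with hP
  set N := (T.filter (fun δ => ¬ 0 < f δ)).filter (fun δ => f δ < 0) with hN
  have hsplit : ∑ δ ∈ T, f δ • δ
      = (∑ δ ∈ P, f δ • δ) + ∑ δ ∈ T.filter (fun δ => ¬ 0 < f δ), f δ • δ :=
    (Finset.sum_filter_add_sum_filter_not T _ _).symm
  have hsplit2 : ∑ δ ∈ T.filter (fun δ => ¬ 0 < f δ), f δ • δ
      = (∑ δ ∈ N, f δ • δ) +
        ∑ δ ∈ (T.filter (fun δ => ¬ 0 < f δ)).filter (fun δ => ¬ f δ < 0), f δ • δ :=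
    (Finset.sum_filter_add_sum_filter_not _ _ _).symm
  have hzero3 : ∑ δ ∈ (T.filter (fun δ => ¬ 0 < f δ)).filter (fun δ => ¬ f δ < 0), f δ • δ
      = 0 := by
    refine Finset.sum_eq_zero fun δ hδ => ?_
    simp only [Finset.mem_filter] at hδ
    have : f δ = 0 := by
      have h1 := hδ.1.2
      have h2 := hδ.2
      push_neg at h1 h2
      linarith
    simp [this]
  set u := ∑ δ ∈ P, f δ • δ with hu
  set v := ∑ δ ∈ N, (-(f δ)) • δ with hv
  have huv : u = v := by
    have h0 : u + ∑ δ ∈ N, f δ • δ = 0 := by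
      rw [hsplit2, hzero3, add_zero] at hsplit
      rw [← hsplit]
      exact hsum
    have h2 : v = -∑ δ ∈ N, f δ • δ := by
      rw [hv, ← Finset.sum_neg_distrib]
      exact Finset.sum_congr rfl fun δ _ => by rw [neg_smul]
    rw [h2]
    exact eq_neg_of_add_eq_zero_left h0
  have hinner : ⟪u, v⟫ ≤ 0 := by
    rw [hu, hv, sum_inner]
    refine Finset.sum_nonpos fun δ hδP => ?_
    rw [inner_sum]
    refine Finset.sum_nonpos fun ε hεN => ?_
    rw [real_inner_smul_left, real_inner_smul_right]
    have hfδ : 0 < f δ := (Finset.mem_filter.mp hδP).2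
    have hfε : f ε < 0 := ((Finset.mem_filter.mp hεN)).2
    have hne : δ ≠ ε := fun h => by rw [h] at hfδ; linarith
    have hip := simp_inner_nonpos hΦ hgen (hsupp δ (ne_of_gt hfδ)) (hsupp ε (ne_of_lt hfε)) hne
    have h4 : 0 ≤ f δ * (-(f ε)) := mul_nonneg (by linarith) (by linarith)
    rw [← mul_assoc]
    exact mul_nonpos_iff.mpr (Or.inl ⟨h4, hip⟩)
  have h1 : ⟪u, u⟫ = ⟪u, v⟫ := by rw [← huv]
  have hu0 : u = 0 := inner_self_eq_zero.mp
    (le_antisymm (h1.le.trans hinner) real_inner_self_nonneg)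
  have hv0 : v = 0 := huv ▸ hu0
  have htP : ∑ δ ∈ P, f δ * ⟪δ, t⟫ = 0 := by
    have h : ⟪u, t⟫ = 0 := by rw [hu0]; exact inner_zero_left t
    rw [hu, sum_inner] at h
    simpa [real_inner_smul_left] using h
  have htN : ∑ δ ∈ N, (-(f δ)) * ⟪δ, t⟫ = 0 := by
    have h : ⟪v, t⟫ = 0 := by rw [hv0]; exact inner_zero_left t
    rw [hv, sum_inner] at h
    simpa [real_inner_smul_left] using h
  have hPe : P = ∅ := by
    rw [← Finset.not_nonempty_iff_eq_empty]
    intro hne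
    have := Finset.sum_pos (fun δ hδ => mul_pos (Finset.mem_filter.mp hδ).2
      ((hsupp δ (ne_of_gt (Finset.mem_filter.mp hδ).2)).2.1)) hne
    rw [htP] at this
    exact lt_irrefl 0 this
  have hNe : N = ∅ := by
    rw [← Finset.not_nonempty_iff_eq_empty]
    intro hne
    have := Finset.sum_pos (fun δ hδ => mul_pos
      (by linarith [(Finset.mem_filter.mp hδ).2] : (0:ℝ) < -(f δ))
      ((hsupp δ (ne_of_lt (Finset.mem_filter.mp hδ).2)).2.1)) hne
    rw [htN] at this
    exact lt_irrefl 0 this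
  intro δ
  by_contra hne
  have hδT : δ ∈ T := (mem_TF hΦ).mpr (hsupp δ hne).1
  rcases lt_trichotomy (f δ) 0 with h | h | h
  · have : δ ∈ N := by
      rw [hN]
      exact Finset.mem_filter.mpr ⟨Finset.mem_filter.mpr ⟨hδT, by linarith⟩, h⟩
    rw [hNe] at this
    simp at this
  · exact hne h
  · have : δ ∈ P := by
      rw [hP]
      exact Finset.mem_filter.mpr ⟨hδT, h⟩
    rw [hPe] at this
    simp at this

/-- simple reflections send other positive roots to positive roots -/
lemma simp_refl_pos (hΦ : IsRootSystem Φ) (hgen : ∀ γ ∈ Φ, ⟪γ, t⟫ ≠ 0)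
    {α γ : V} (hsα : Simp Φ hΦ t α) (hγΦ : γ ∈ Φ) (hγpos : 0 < ⟪γ, t⟫)
    (hnp : ∀ r : ℝ, γ ≠ r • α) : 0 < ⟪sRefl α γ, t⟫ := by
  have hαΦ := hsα.1
  have hγ'Φ : sRefl α γ ∈ Φ := hΦ.refl_mem α hαΦ γ hγΦ
  rcases lt_or_gt_of_ne (hgen _ hγ'Φ) with hneg | hpos
  swap
  · exact hpos
  exfalso
  have hγ''Φ : -(sRefl α γ) ∈ Φ := hΦ.neg_mem _ hγ'Φ
  have hγ''pos : 0 < ⟪-(sRefl α γ), t⟫ := by rw [inner_neg_left]; linarith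
  obtain ⟨c, hc0, hcsupp, hcsum⟩ := exists_simp_rep hΦ γ hγΦ hγpos
  obtain ⟨d, hd0, hdsupp, hdsum⟩ := exists_simp_rep hΦ _ hγ''Φ hγ''pos
  set k : ℝ := 2 * ⟪γ, α⟫ / ⟪α, α⟫ with hk
  have hkey : γ + (-(sRefl α γ)) = k • α := by
    rw [sRefl_apply]
    module
  set f : V → ℝ := fun δ => c δ + d δ - (if δ = α then k else 0) with hf
  have hfsum : ∑ δ ∈ TF Φ hΦ, f δ • δ = 0 := by
    have e1 : ∀ δ ∈ TF Φ hΦ, f δ • δ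
        = c δ • δ + d δ • δ - (if δ = α then k else 0) • δ := by
      intro δ _
      rw [hf]
      simp only
      rw [sub_smul, add_smul]
    rw [Finset.sum_congr rfl e1, Finset.sum_sub_distrib, Finset.sum_add_distrib,
      ind_sum hΦ hαΦ, ← hcsum, ← hdsum, ← hkey]
    abel
  have hfsupp : ∀ δ, f δ ≠ 0 → Simp Φ hΦ t δ := by
    intro δ hδ
    rcases eq_or_ne δ α with rfl | hne
    · exact hsα
    · rw [hf] at hδ
      simp only [hne, if_neg, if_false] at hδ
      rcases eq_or_ne (c δ) 0 with h | h
      · refine hdsupp δ ?_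
        intro h2
        rw [h, h2] at hδ
        simp at hδ
      · exact hcsupp δ h
  have hzero := simp_sum_eq_zero hΦ hgen hfsupp hfsum
  have hcd : ∀ δ, δ ≠ α → c δ = 0 := by
    intro δ hne
    have := hzero δ
    rw [hf] at this
    simp only [hne, if_neg, if_false] at this
    have h1 := hc0 δ
    have h2 := hd0 δ
    linarith
  have : γ = c α • α := by
    rw [hcsum, Finset.sum_eq_single α]
    · intro b _ hb; rw [hcd b hb]; simp
    · intro hα; exact absurd ((mem_TF hΦ).mpr hαΦ) hα
  exact hnp (c α) this

/-- every positive root pairs positively with some simple root -/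
lemma exists_simp_pair (hΦ : IsRootSystem Φ) {γ : V} (hγΦ : γ ∈ Φ)
    (hγpos : 0 < ⟪γ, t⟫) : ∃ α, Simp Φ hΦ t α ∧ 0 < ⟪γ, α⟫ := by
  obtain ⟨c, hc0, hcsupp, hcsum⟩ := exists_simp_rep hΦ γ hγΦ hγpos
  by_contra h
  push_neg at h
  have hQ : (0:ℝ) < ⟪γ, γ⟫ := root_inner_pos hΦ hγΦ
  have : ⟪γ, γ⟫ = ∑ δ ∈ TF Φ hΦ, c δ * ⟪γ, δ⟫ := by
    nth_rewrite 2 [hcsum]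
    rw [inner_sum]
    exact Finset.sum_congr rfl fun δ _ => real_inner_smul_right _ _ _
  have hle : ∑ δ ∈ TF Φ hΦ, c δ * ⟪γ, δ⟫ ≤ 0 := by
    refine Finset.sum_nonpos fun δ _ => ?_
    rcases eq_or_ne (c δ) 0 with hc | hc
    · simp [hc]
    · have hs := hcsupp δ hc
      have := h δ hs
      have := hc0 δ
      nlinarith
  linarith [this ▸ hQ]

end PosSimp3
end CarterAux
namespace CarterAux
variable {V : Type*} [NormedAddCommGroup V] [InnerProductSpace ℝ V]

section PosSimp4
open scoped Classical

variable {Φ : Set V} {t : V}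

/-- a word consisting of simple roots -/
def IsSimpWord (Φ : Set V) (hΦ : IsRootSystem Φ) (t : V) (l : List V) : Prop :=
  ∀ δ ∈ l, Simp Φ hΦ t δ

lemma simpword_mem_Phi {hΦ : IsRootSystem Φ} {l : List V}
    (hl : IsSimpWord Φ hΦ t l) : ∀ δ ∈ l, δ ∈ Φ := fun δ hδ => (hl δ hδ).1

/-- every root reflection is a product of simple reflections -/
lemma simp_word_refl (hΦ : IsRootSystem Φ) (hgen : ∀ γ ∈ Φ, ⟪γ, t⟫ ≠ 0) :
    ∀ γ ∈ Φ, 0 < ⟪γ, t⟫ → ∃ l, IsSimpWord Φ hΦ t l ∧ wp l = sRefl γ := by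
  suffices H : ∀ n : ℕ, ∀ γ ∈ Φ, 0 < ⟪γ, t⟫ →
      ((TF Φ hΦ).filter (fun δ => 0 < ⟪δ, t⟫ ∧ ⟪δ, t⟫ < ⟪γ, t⟫)).card ≤ n →
      ∃ l, IsSimpWord Φ hΦ t l ∧ wp l = sRefl γ by
    intro γ hγ hpos
    exact H _ γ hγ hpos le_rfl
  intro n
  induction n with
  | zero =>
      intro γ hγΦ hγpos _
      -- γ must be simple (no positive roots of smaller height), in particular:
      obtain ⟨α, hsα, hpair⟩ := exists_simp_pair hΦ hγΦ hγpos
      -- show γ is parallel to α, since otherwise sRefl α γ would be a smaller positive root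
      by_cases hpar : ∃ r : ℝ, γ = r • α
      · obtain ⟨r, rfl⟩ := hpar
        have hr : r ≠ 0 := by
          intro h; rw [h, zero_smul] at hγΦ; exact hΦ.zero_not_mem hγΦ
        exact ⟨[α], fun δ hδ => by simp at hδ; rw [hδ]; exact hsα, by
          funext x
          rw [show ([α] : List V) = [α] from rfl]
          show wp [α] x = sRefl (r • α) x
          rw [sRefl_smul_root hr]
          simp [wp_cons]⟩
      · exfalso
        push_neg at hpar
        have hpos' := simp_refl_pos hΦ hgen hsα hγΦ hγpos hpar
        have hlt : ⟪sRefl α γ, t⟫ < ⟪γ, t⟫ := by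
          rw [sRefl_apply, inner_sub_left, real_inner_smul_left]
          have hk : 0 < 2 * ⟪γ, α⟫ / ⟪α, α⟫ :=
            div_pos (by linarith) (root_inner_pos hΦ hsα.1)
          nlinarith [hsα.2.1]
        have hmem : sRefl α γ ∈ (TF Φ hΦ).filter
            (fun δ => 0 < ⟪δ, t⟫ ∧ ⟪δ, t⟫ < ⟪γ, t⟫) := by
          refine Finset.mem_filter.mpr ⟨(mem_TF hΦ).mpr (hΦ.refl_mem α hsα.1 γ hγΦ), hpos', hlt⟩
        have h0 : ((TF Φ hΦ).filter (fun δ => 0 < ⟪δ, t⟫ ∧ ⟪δ, t⟫ < ⟪γ, t⟫)).card = 0 :=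
          Nat.le_zero.mp ‹_›
        rw [Finset.card_eq_zero.mp h0] at hmem
        simp at hmem
  | succ n ih =>
      intro γ hγΦ hγpos hcard
      obtain ⟨α, hsα, hpair⟩ := exists_simp_pair hΦ hγΦ hγpos
      by_cases hpar : ∃ r : ℝ, γ = r • α
      · obtain ⟨r, rfl⟩ := hpar
        have hr : r ≠ 0 := by
          intro h; rw [h, zero_smul] at hγΦ; exact hΦ.zero_not_mem hγΦ
        exact ⟨[α], fun δ hδ => by simp at hδ; rw [hδ]; exact hsα, by
          funext x
          show wp [α] x = sRefl (r • α) x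
          rw [sRefl_smul_root hr]
          simp [wp_cons]⟩
      · push_neg at hpar
        set γ' := sRefl α γ with hγ'
        have hγ'Φ : γ' ∈ Φ := hΦ.refl_mem α hsα.1 γ hγΦ
        have hpos' := simp_refl_pos hΦ hgen hsα hγΦ hγpos hpar
        have hlt : ⟪γ', t⟫ < ⟪γ, t⟫ := by
          rw [hγ', sRefl_apply, inner_sub_left, real_inner_smul_left]
          have hk : 0 < 2 * ⟪γ, α⟫ / ⟪α, α⟫ :=
            div_pos (by linarith) (root_inner_pos hΦ hsα.1)
          nlinarith [hsα.2.1]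
        have hcard' : ((TF Φ hΦ).filter (fun δ => 0 < ⟪δ, t⟫ ∧ ⟪δ, t⟫ < ⟪γ', t⟫)).card ≤ n := by
          have hsub : (TF Φ hΦ).filter (fun δ => 0 < ⟪δ, t⟫ ∧ ⟪δ, t⟫ < ⟪γ', t⟫) ⊂
              (TF Φ hΦ).filter (fun δ => 0 < ⟪δ, t⟫ ∧ ⟪δ, t⟫ < ⟪γ, t⟫) := by
            refine Finset.ssubset_iff_of_subset ?_ |>.mpr ?_
            · intro y hy
              simp only [Finset.mem_filter] at hy ⊢
              exact ⟨hy.1, hy.2.1, lt_trans hy.2.2 hlt⟩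
            · exact ⟨γ', by simp [Finset.mem_filter, (mem_TF hΦ).mpr hγ'Φ, (by rw [hγ']; exact hpos' : 0 < ⟪γ', t⟫), hlt],
                by simp [Finset.mem_filter]⟩
          have := Finset.card_lt_card hsub
          omega
        obtain ⟨l', hl', hwl'⟩ := ih γ' hγ'Φ hpos' hcard'
        refine ⟨α :: (l' ++ [α]), ?_, ?_⟩
        · intro δ hδ
          rcases List.mem_cons.mp hδ with rfl | hδ'
          · exact hsα
          rcases List.mem_append.mp hδ' with h | h
          · exact hl' δ h
          · have hδα : δ = α := by simpa using h
            rw [hδα]; exact hsα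
        · funext x
          rw [wp_cons, wp_append]
          have h1 : wp [α] x = sRefl α x := by simp [wp_cons]
          rw [h1, hwl']
          show sRefl α (sRefl γ' (sRefl α x)) = sRefl γ x
          rw [sRefl_conj α γ' x, hγ', sRefl_sRefl]

/-- every word of root reflections equals a word of simple reflections -/
lemma root_word_to_simp (hΦ : IsRootSystem Φ) (hgen : ∀ γ ∈ Φ, ⟪γ, t⟫ ≠ 0) :
    ∀ L : List V, (∀ γ ∈ L, γ ∈ Φ) → ∃ l, IsSimpWord Φ hΦ t l ∧ wp l = wp L := by
  intro L
  induction L with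
  | nil => exact fun _ => ⟨[], fun δ hδ => by simp at hδ, rfl⟩
  | cons a L ihL =>
      intro hL
      obtain ⟨l₁, hl₁, hwl₁⟩ := ihL (fun γ hγ => hL γ (by simp [hγ]))
      have haΦ : a ∈ Φ := hL a (by simp)
      have hrefl : ∃ l₀, IsSimpWord Φ hΦ t l₀ ∧ wp l₀ = sRefl a := by
        rcases lt_or_gt_of_ne (hgen a haΦ) with hneg | hpos
        · have h1 : -a ∈ Φ := hΦ.neg_mem a haΦ
          have h2 : 0 < ⟪-a, t⟫ := by rw [inner_neg_left]; linarith
          obtain ⟨l₀, h3, h4⟩ := simp_word_refl hΦ hgen (-a) h1 h2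
          exact ⟨l₀, h3, by rw [h4, sRefl_neg_root]⟩
        · exact simp_word_refl hΦ hgen a haΦ hpos
      obtain ⟨l₀, hl₀, hwl₀⟩ := hrefl
      refine ⟨l₀ ++ l₁, ?_, ?_⟩
      · intro δ hδ
        rcases List.mem_append.mp hδ with h | h
        · exact hl₀ δ h
        · exact hl₁ δ h
      · funext x
        rw [wp_append, hwl₁, wp_cons]
        rw [← hwl₀]

/-- the exchange lemma -/
lemma exchange (hΦ : IsRootSystem Φ) (hgen : ∀ γ ∈ Φ, ⟪γ, t⟫ ≠ 0) :
    ∀ l : List V, IsSimpWord Φ hΦ t l → ∀ α, Simp Φ hΦ t α → ⟪wp l α, t⟫ < 0 →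
    ∃ l', IsSimpWord Φ hΦ t l' ∧ (∀ x, wp l' x = wp l (sRefl α x)) ∧
      l'.length + 1 = l.length := by
  intro l
  induction l with
  | nil =>
      intro _ α hsα hneg
      exact absurd hsα.2.1 (by simp only [wp_nil, id_eq] at hneg; linarith)
  | cons β m ih =>
      intro hl α hsα hneg
      have hm : IsSimpWord Φ hΦ t m := fun δ hδ => hl δ (by simp [hδ])
      have hsβ : Simp Φ hΦ t β := hl β (by simp)
      have hγΦ : wp m α ∈ Φ := wp_mem hΦ.refl_mem (simpword_mem_Phi hm) hsα.1
      by_cases hγ : ⟪wp m α, t⟫ < 0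
      · obtain ⟨m', hm', hwm', hlen⟩ := ih hm α hsα hγ
        refine ⟨β :: m', fun δ hδ => ?_, fun x => ?_, by simp [← hlen]⟩
        · rcases List.mem_cons.mp hδ with rfl | h
          · exact hsβ
          · exact hm' δ h
        · rw [wp_cons, hwm', wp_cons]
      · have hγpos : 0 < ⟪wp m α, t⟫ :=
          lt_of_le_of_ne (not_lt.mp hγ) (Ne.symm (hgen _ hγΦ))
        have hneg' : ⟪sRefl β (wp m α), t⟫ < 0 := by
          rw [wp_cons] at hneg; exact hneg
        have hpar : ∃ r : ℝ, wp m α = r • β := by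
          by_contra h
          push_neg at h
          exact absurd (simp_refl_pos hΦ hgen hsβ hγΦ hγpos h) (by linarith)
        obtain ⟨r, hr⟩ := hpar
        have hr0 : r ≠ 0 := by
          intro h
          rw [h, zero_smul] at hr
          exact root_ne_zero hΦ hγΦ hr
        have hrefl_eq : sRefl (wp m α) = sRefl β := by rw [hr, sRefl_smul_root hr0]
        have key : ∀ x, wp m (sRefl α x) = sRefl β (wp m x) := by
          intro x
          have h1 := wp_conj m α (wp m x)
          rw [wp_reverse_apply] at h1
          rw [← h1, hrefl_eq]
        refine ⟨m, hm, fun x => ?_, by simp⟩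
        rw [wp_cons, key, sRefl_sRefl]

/-- a word of simple reflections with no inversions is the identity -/
lemma no_inversion_id (hΦ : IsRootSystem Φ) (hgen : ∀ γ ∈ Φ, ⟪γ, t⟫ ≠ 0) :
    ∀ n : ℕ, ∀ l : List V, l.length ≤ n → IsSimpWord Φ hΦ t l →
    (∀ α, Simp Φ hΦ t α → ¬ (⟪wp l α, t⟫ < 0)) → ∀ x, wp l x = x := by
  intro n
  induction n with
  | zero =>
      intro l hlen _ _ x
      rw [List.length_eq_zero_iff.mp (Nat.le_zero.mp hlen)]
      rfl
  | succ n ih =>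
      intro l hlen hl hinv x
      rcases List.eq_nil_or_concat l with rfl | ⟨m, α, rfl⟩
      · rfl
      have hconc : m.concat α = m ++ [α] := List.concat_eq_append
      have hsα : Simp Φ hΦ t α := hl α (by rw [hconc]; simp)
      have hm : IsSimpWord Φ hΦ t m := fun δ hδ => hl δ (by rw [hconc]; simp [hδ])
      have hwp : ∀ y, wp (m.concat α) y = wp m (sRefl α y) := by
        intro y
        rw [hconc, wp_append]
        have h5 : wp [α] y = sRefl α y := by simp [wp_cons]
        rw [h5]
      have hαm : wp m α ∈ Φ := wp_mem hΦ.refl_mem (simpword_mem_Phi hm) hsα.1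
      have h2 : wp (m.concat α) α = -(wp m α) := by
        rw [hwp, sRefl_self (root_ne_zero hΦ hsα.1), wp_neg]
      have h3 : ⟪wp m α, t⟫ < 0 := by
        have h4 := hinv α hsα
        rw [h2, inner_neg_left] at h4
        rcases lt_or_gt_of_ne (hgen _ hαm) with h | h
        · exact h
        · exfalso; exact h4 (by linarith)
      obtain ⟨l'', hl'', hwl'', hlen''⟩ := exchange hΦ hgen m hm α hsα h3
      have hflip : ∀ y, wp l'' y = wp (m.concat α) y := fun y => by rw [hwl'', hwp]
      have hlen2 : l''.length ≤ n := by
        rw [hconc] at hlen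
        simp at hlen
        omega
      have := ih l'' hlen2 hl'' (fun δ hδ => by rw [hflip]; exact hinv δ hδ) x
      rw [← hflip]
      exact this

end PosSimp4
end CarterAux
namespace CarterAux
variable {V : Type*} [NormedAddCommGroup V] [InnerProductSpace ℝ V]

open scoped Classical

/-- a vector in `F` not orthogonal to any member of `s`, given that no member of `s`
is orthogonal to all of `F` -/
lemma generic_in_submodule (F : Submodule ℝ V) (s : Finset V)
    (h : ∀ γ ∈ s, ∃ y ∈ F, ⟪γ, y⟫ ≠ 0) :
    ∃ x ∈ F, ∀ γ ∈ s, ⟪γ, x⟫ ≠ 0 := by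
  classical
  induction s using Finset.induction_on with
  | empty => exact ⟨0, F.zero_mem, by simp⟩
  | @insert γ₀ s hγ₀s ih =>
      obtain ⟨x, hxF, hx⟩ := ih (fun γ hγ => h γ (Finset.mem_insert_of_mem hγ))
      obtain ⟨y₀, hy₀F, hy₀⟩ := h γ₀ (Finset.mem_insert_self _ _)
      set bad : Finset ℝ := (insert γ₀ s).image
        (fun γ => if ⟪γ, y₀⟫ = 0 then 0 else -⟪γ, x⟫ / ⟪γ, y₀⟫) with hbad
      obtain ⟨c, hc⟩ := Infinite.exists_notMem_finset bad
      refine ⟨x + c • y₀, F.add_mem hxF (F.smul_mem c hy₀F), ?_⟩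
      intro γ hγ
      rw [inner_add_right, real_inner_smul_right]
      by_cases hz : ⟪γ, y₀⟫ = 0
      · rw [hz, mul_zero, add_zero]
        rcases Finset.mem_insert.mp hγ with rfl | hγs
        · exact absurd hz hy₀
        · exact hx γ hγs
      · intro h0
        have hceq : c = -⟪γ, x⟫ / ⟪γ, y₀⟫ := by
          field_simp
          linarith
        refine hc ?_
        rw [hbad]
        refine Finset.mem_image.mpr ⟨γ, hγ, ?_⟩
        rw [if_neg hz, ← hceq]

/-- a generic functional adapted to the point `x` -/
lemma exists_adapted {Φ : Set V} (hΦ : IsRootSystem Φ) (x : V) :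
    ∃ t, (∀ γ ∈ Φ, ⟪γ, t⟫ ≠ 0) ∧ (∀ γ ∈ Φ, 0 < ⟪γ, x⟫ → 0 < ⟪γ, t⟫) := by
  classical
  obtain ⟨z, -, hz⟩ := generic_in_submodule (⊤ : Submodule ℝ V) (TF Φ hΦ)
    (fun γ hγ => ⟨γ, trivial, ne_of_gt (root_inner_pos hΦ ((mem_TF hΦ).mp hγ))⟩)
  set C : Finset ℝ := ((TF Φ hΦ).filter (fun γ => ⟪γ, x⟫ ≠ 0)).image
    (fun γ => |⟪γ, x⟫| / (|⟪γ, z⟫| + 1)) with hC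
  set ε : ℝ := if hCne : C.Nonempty then min (C.min' hCne) 1 else 1 with hε
  have hεpos : 0 < ε := by
    rw [hε]
    split
    · rename_i hCne
      refine lt_min ?_ one_pos
      obtain ⟨γ, hγ, hγeq⟩ := Finset.mem_image.mp (C.min'_mem hCne)
      rw [← hγeq]
      have := (Finset.mem_filter.mp hγ).2
      positivity
    · exact one_pos
  have hkey : ∀ γ ∈ Φ, ⟪γ, x⟫ ≠ 0 → ε * |⟪γ, z⟫| < |⟪γ, x⟫| := by
    intro γ hγΦ hγx
    have hγC : |⟪γ, x⟫| / (|⟪γ, z⟫| + 1) ∈ C :=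
      Finset.mem_image.mpr ⟨γ, Finset.mem_filter.mpr ⟨(mem_TF hΦ).mpr hγΦ, hγx⟩, rfl⟩
    have hCne : C.Nonempty := ⟨_, hγC⟩
    have hεle : ε ≤ |⟪γ, x⟫| / (|⟪γ, z⟫| + 1) := by
      rw [hε, dif_pos hCne]
      exact le_trans (min_le_left _ _) (C.min'_le _ hγC)
    have habs : 0 < |⟪γ, x⟫| := abs_pos.mpr hγx
    have h1 : |⟪γ, x⟫| / (|⟪γ, z⟫| + 1) * |⟪γ, z⟫| < |⟪γ, x⟫| := by
      rw [div_mul_eq_mul_div, div_lt_iff₀ (by positivity)]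
      nlinarith [abs_nonneg (⟪γ, z⟫ : ℝ)]
    calc ε * |⟪γ, z⟫| ≤ |⟪γ, x⟫| / (|⟪γ, z⟫| + 1) * |⟪γ, z⟫| :=
          mul_le_mul_of_nonneg_right hεle (abs_nonneg _)
      _ < |⟪γ, x⟫| := h1
  refine ⟨x + ε • z, ?_, ?_⟩
  · intro γ hγΦ
    rw [inner_add_right, real_inner_smul_right]
    by_cases hγx : ⟪γ, x⟫ = 0
    · rw [hγx, zero_add]
      exact mul_ne_zero (ne_of_gt hεpos) (hz γ ((mem_TF hΦ).mpr hγΦ))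
    · intro h0
      have h1 := hkey γ hγΦ hγx
      have h2 : ⟪γ, x⟫ = -(ε * ⟪γ, z⟫) := by linarith
      have h3 : |⟪γ, x⟫| = ε * |⟪γ, z⟫| := by
        rw [h2, abs_neg, abs_mul, abs_of_pos hεpos]
      linarith
  · intro γ hγΦ hγx
    rw [inner_add_right, real_inner_smul_right]
    have h1 := hkey γ hγΦ (ne_of_gt hγx)
    have h2 : |ε * ⟪γ, z⟫| = ε * |⟪γ, z⟫| := by rw [abs_mul, abs_of_pos hεpos]
    have h3 := neg_abs_le (ε * ⟪γ, z⟫)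
    rw [abs_of_pos hγx] at h1
    rw [h2] at h3
    linarith

/-- the fixed subspace of a word -/
noncomputable def fixSub (L : List V) : Submodule ℝ V where
  carrier := {x | wp L x = x}
  add_mem' := fun {a b} ha hb => by
    simp only [Set.mem_setOf_eq] at *
    rw [wp_add, ha, hb]
  zero_mem' := by
    have : wp L ((0:ℝ) • (0:V)) = (0:ℝ) • wp L 0 := wp_smul L 0 0
    simpa using this
  smul_mem' := fun c {x} hx => by
    simp only [Set.mem_setOf_eq] at *
    rw [wp_smul, hx]

lemma mem_fixSub {L : List V} {x : V} : x ∈ fixSub L ↔ wp L x = x := Iff.rfl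

/-- Steinberg-type theorem: if a word is not the identity, some root is orthogonal
to its entire fixed space -/
theorem exists_root_orthogonal {Φ : Set V} (hΦ : IsRootSystem Φ)
    {L : List V} (hL : ∀ γ ∈ L, γ ∈ Φ) (hne : wp L ≠ id) :
    ∃ γ ∈ Φ, ∀ y, wp L y = y → ⟪γ, y⟫ = 0 := by
  classical
  set S : Finset V := (TF Φ hΦ).filter
    (fun γ => ¬ ∀ y, wp L y = y → ⟪γ, y⟫ = 0) with hS
  have hSprop : ∀ γ ∈ S, ∃ y ∈ fixSub L, ⟪γ, y⟫ ≠ 0 := by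
    intro γ hγ
    have := (Finset.mem_filter.mp hγ).2
    push_neg at this
    obtain ⟨y, hy1, hy2⟩ := this
    exact ⟨y, hy1, hy2⟩
  obtain ⟨x, hxF, hxgen⟩ := generic_in_submodule (fixSub L) S hSprop
  obtain ⟨t, hgen, hdom'⟩ := exists_adapted hΦ x
  have hdom : ∀ γ ∈ Φ, 0 < ⟪γ, t⟫ → 0 ≤ ⟪γ, x⟫ := by
    intro γ hγΦ hγt
    by_contra h
    push_neg at h
    have h1 : 0 < ⟪-γ, x⟫ := by rw [inner_neg_left]; linarith
    have h2 := hdom' (-γ) (hΦ.neg_mem γ hγΦ) h1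
    rw [inner_neg_left] at h2
    linarith
  obtain ⟨l, hl, hwl⟩ := root_word_to_simp hΦ hgen L hL
  have hlinv : ∃ α, Simp Φ hΦ t α ∧ ⟪wp l α, t⟫ < 0 := by
    by_contra h
    push_neg at h
    refine hne (funext fun y => ?_)
    have := no_inversion_id hΦ hgen l.length l le_rfl hl
      (fun δ hδ => not_lt.mpr (h δ hδ)) y
    rw [← hwl]
    exact this
  obtain ⟨α, hsα, hinv⟩ := hlinv
  have hαΦ : α ∈ Φ := hsα.1
  have hγ₁Φ : wp l α ∈ Φ := wp_mem hΦ.refl_mem (simpword_mem_Phi hl) hαΦ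
  have hx1 : 0 ≤ ⟪α, x⟫ := hdom α hαΦ hsα.2.1
  have hx2 : ⟪wp l α, x⟫ ≤ 0 := by
    have h1 : 0 < ⟪-(wp l α), t⟫ := by rw [inner_neg_left]; linarith
    have h2 := hdom _ (hΦ.neg_mem _ hγ₁Φ) h1
    rw [inner_neg_left] at h2
    linarith
  have hxfix : wp l x = x := by rw [hwl]; exact hxF
  have heqi : ⟪wp l α, x⟫ = ⟪α, x⟫ := by
    conv_lhs => rw [← hxfix]
    exact wp_inner l α x
  have hαx : ⟪α, x⟫ = 0 := le_antisymm (heqi ▸ hx2) hx1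
  refine ⟨α, hαΦ, ?_⟩
  by_contra h
  have hαS : α ∈ S := Finset.mem_filter.mpr ⟨(mem_TF hΦ).mpr hαΦ, h⟩
  exact hxgen α hαS hαx

end CarterAux
namespace CarterAux
variable {V : Type*} [NormedAddCommGroup V] [InnerProductSpace ℝ V]
  [FiniteDimensional ℝ V]

/-- the word as a linear map -/
noncomputable def wpL (L : List V) : V →ₗ[ℝ] V :=
  IsLinearMap.mk' (wp L) ⟨wp_add L, fun c x => wp_smul L c x⟩

@[simp] lemma wpL_apply (L : List V) (x : V) : wpL L x = wp L x := rfl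

/-- prepending a reflection in a root orthogonal to the whole fixed space
strictly increases the fixed space -/
lemma descent {Φ : Set V} (hΦ : IsRootSystem Φ) {L : List V}
    {γ : V} (hγΦ : γ ∈ Φ) (hγF : ∀ y, wp L y = y → ⟪γ, y⟫ = 0) :
    fixSub L < fixSub (γ :: L) := by
  have hγ0 : γ ≠ 0 := root_ne_zero hΦ hγΦ
  have hle : fixSub L ≤ fixSub (γ :: L) := by
    intro y hy
    rw [mem_fixSub] at hy ⊢
    rw [wp_cons, hy]
    exact sRefl_of_inner_zero (by rw [real_inner_comm]; exact hγF y hy)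
  -- γ is in the range of 1 - w
  set T : V →ₗ[ℝ] V := LinearMap.id - wpL L with hT
  have hker : LinearMap.ker T = fixSub L := by
    ext y
    rw [LinearMap.mem_ker, mem_fixSub, hT]
    simp only [LinearMap.sub_apply, LinearMap.id_apply, wpL_apply]
    constructor
    · intro h; rw [← sub_eq_zero]; rw [sub_eq_zero] at h ⊢; exact h.symm
    · intro h; rw [h]; simp
  have hrange_le : LinearMap.range T ≤ (fixSub L)ᗮ := by
    rintro _ ⟨x, rfl⟩
    rw [Submodule.mem_orthogonal]
    intro v hv
    rw [hT]
    simp only [LinearMap.sub_apply, LinearMap.id_apply, wpL_apply]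
    rw [inner_sub_right]
    have h1 : ⟪v, wp L x⟫ = ⟪wp L v, wp L x⟫ := by
      rw [mem_fixSub] at hv
      rw [hv]
    rw [h1, wp_inner]
    ring
  have hrange : LinearMap.range T = (fixSub L)ᗮ := by
    refine Submodule.eq_of_le_of_finrank_le hrange_le ?_
    have h1 := LinearMap.finrank_range_add_finrank_ker T
    have h2 := Submodule.finrank_add_finrank_orthogonal (fixSub L)
    rw [hker] at h1
    omega
  have hγmem : γ ∈ (fixSub L)ᗮ := by
    rw [Submodule.mem_orthogonal]
    intro v hv
    rw [real_inner_comm]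
    exact hγF v hv
  rw [← hrange] at hγmem
  obtain ⟨x, hx⟩ := hγmem
  have hx' : x - wp L x = γ := by
    rw [hT] at hx
    simpa using hx
  have hwx : wp L x = x - γ := by rw [← hx']; abel
  have hQ : (0:ℝ) < ⟪γ, γ⟫ := root_inner_pos hΦ hγΦ
  have hkey : 2 * ⟪x, γ⟫ = ⟪γ, γ⟫ := by
    have e1 : ⟪γ, γ⟫ = ⟪x - wp L x, x - wp L x⟫ := by rw [hx']
    rw [inner_sub_left, inner_sub_right, inner_sub_right, wp_inner,
      real_inner_comm (wp L x) x] at e1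
    have e2 : ⟪x, γ⟫ = ⟪x, x⟫ - ⟪x, wp L x⟫ := by
      rw [← hx', inner_sub_right]
    have e3 : ⟪wp L x, x⟫ = ⟪x, wp L x⟫ := real_inner_comm _ _
    linarith
  have hx1 : wp (γ :: L) x = x := by
    rw [wp_cons, hwx, sRefl_sub, sRefl_self hγ0, sRefl_apply]
    have hc : 2 * ⟪x, γ⟫ / ⟪γ, γ⟫ = 1 := by
      rw [hkey, div_self (ne_of_gt hQ)]
    rw [hc, one_smul]
    abel
  have hx2 : wp L x ≠ x := by
    rw [hwx]
    intro h
    exact hγ0 (sub_eq_self.mp h)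
  refine lt_of_le_of_ne hle ?_
  intro heq
  have : x ∈ fixSub L := by rw [heq]; exact hx1
  exact hx2 this

end CarterAux
namespace CarterAux
variable {V : Type*} [NormedAddCommGroup V] [InnerProductSpace ℝ V]
  [FiniteDimensional ℝ V]

/-- Carter's Lemma 2: every word can be shortened to length `codim (fixed space)` -/
theorem shorten {Φ : Set V} (hΦ : IsRootSystem Φ) :
    ∀ d : ℕ, ∀ L : List V, (∀ γ ∈ L, γ ∈ Φ) →
    Module.finrank ℝ V ≤ d + Module.finrank ℝ (fixSub L) →
    ∃ L' : List V, (∀ γ ∈ L', γ ∈ Φ) ∧ wp L' = wp L ∧ L'.length ≤ d := by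
  intro d
  induction d with
  | zero =>
      intro L hL hrk
      have hfr : Module.finrank ℝ (fixSub L) = Module.finrank ℝ V :=
        le_antisymm (Submodule.finrank_le _) (by omega)
      have htop : fixSub L = ⊤ := Submodule.eq_top_of_finrank_eq hfr
      refine ⟨[], by simp, ?_, le_rfl⟩
      funext y
      have : y ∈ fixSub L := htop ▸ Submodule.mem_top
      rw [mem_fixSub] at this
      rw [this]
      rfl
  | succ d ih =>
      intro L hL hrk
      by_cases hid : wp L = id
      · refine ⟨[], by simp, ?_, by simp⟩
        rw [hid]
        rfl
      · obtain ⟨γ, hγΦ, hγF⟩ := exists_root_orthogonal hΦ hL hid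
        have hlt := descent hΦ hγΦ hγF (L := L)
        have hfr := Submodule.finrank_lt_finrank_of_lt hlt
        have hL' : ∀ δ ∈ γ :: L, δ ∈ Φ := by
          intro δ hδ
          rcases List.mem_cons.mp hδ with rfl | h
          · exact hγΦ
          · exact hL δ h
        obtain ⟨L'', hL'', hw'', hlen''⟩ := ih (γ :: L) hL' (by omega)
        refine ⟨γ :: L'', ?_, ?_, by simpa using hlen''⟩
        · intro δ hδ
          rcases List.mem_cons.mp hδ with rfl | h
          · exact hγΦ
          · exact hL'' δ h
        · funext y
          rw [wp_cons, hw'', wp_cons, sRefl_sRefl]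

end CarterAux
namespace CarterAux
variable {V : Type*} [NormedAddCommGroup V] [InnerProductSpace ℝ V]

lemma wp_sub_mem_span (L : List V) (x : V) :
    x - wp L x ∈ Submodule.span ℝ {γ | γ ∈ L} := by
  induction L with
  | nil => simp
  | cons a l ih =>
      have h1 : x - wp (a :: l) x
          = (x - wp l x) + (2 * ⟪wp l x, a⟫ / ⟪a, a⟫) • a := by
        rw [wp_cons, sRefl_apply]
        abel
      rw [h1]
      refine Submodule.add_mem _ ?_ ?_
      · refine Submodule.span_mono ?_ ih
        intro γ hγ
        simp only [Set.mem_setOf_eq] at *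
        exact List.mem_cons_of_mem a hγ
      · exact Submodule.smul_mem _ _ (Submodule.subset_span (by simp))

lemma span_word_le {k : ℕ} (α : Fin k → V) :
    Submodule.span ℝ {γ | γ ∈ List.ofFn α} ≤ Submodule.span ℝ (Set.range α) := by
  refine Submodule.span_mono ?_
  intro γ hγ
  simp only [Set.mem_setOf_eq] at hγ
  exact List.mem_ofFn.mp hγ

/-- for independent roots, fixed points of the product are orthogonal to all roots -/
lemma fix_inner_zero_of_indep : ∀ {k : ℕ} {α : Fin k → V},
    LinearIndependent ℝ α → ∀ {x : V}, wp (List.ofFn α) x = x →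
    ∀ i, ⟪x, α i⟫ = 0 := by
  intro k
  induction k with
  | zero => intro α _ x _ i; exact i.elim0
  | succ k ih =>
      intro α hind x hfix i
      have hcons : LinearIndependent ℝ (Fin.cons (α 0) (Fin.tail α) : Fin (k+1) → V) := by
        rwa [Fin.cons_self_tail]
      obtain ⟨htail, hnotmem⟩ := linearIndependent_fin_cons.mp hcons
      have hα0 : α 0 ≠ 0 := hind.ne_zero 0
      have hQ : ⟪α 0, α 0⟫ ≠ 0 := ne_of_gt (inner_self_pos' hα0)
      have hofn : List.ofFn α = α 0 :: List.ofFn (Fin.tail α) := List.ofFn_succ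
      set z := wp (List.ofFn (Fin.tail α)) x with hz
      have hfix' : sRefl (α 0) z = x := by
        rw [hz, ← wp_cons, ← hofn]
        exact hfix
      set c : ℝ := 2 * ⟪z, α 0⟫ / ⟪α 0, α 0⟫ with hc
      have hxz : x = z - c • α 0 := by rw [← hfix', sRefl_apply]
      have hmem : x - z ∈ Submodule.span ℝ (Set.range (Fin.tail α)) := by
        have h1 := wp_sub_mem_span (List.ofFn (Fin.tail α)) x
        exact span_word_le (Fin.tail α) h1
      have hc0 : c = 0 := by
        by_contra hne
        refine hnotmem ?_
        have h2 : -(x - z) = c • α 0 := by rw [hxz]; abel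
        have h3 : c • α 0 ∈ Submodule.span ℝ (Set.range (Fin.tail α)) := by
          rw [← h2]
          exact Submodule.neg_mem _ hmem
        have h4 := Submodule.smul_mem _ c⁻¹ h3
        rwa [smul_smul, inv_mul_cancel₀ hne, one_smul] at h4
      have hxz' : x = z := by rw [hxz, hc0, zero_smul, sub_zero]
      have hizero : ⟪z, α 0⟫ = 0 := by
        rw [hc] at hc0
        rcases div_eq_zero_iff.mp hc0 with h | h
        · linarith
        · exact absurd h hQ
      have hfixtail : wp (List.ofFn (Fin.tail α)) x = x := by rw [← hz, ← hxz']
      have htailzero := ih htail hfixtail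
      refine Fin.cases ?_ ?_ i
      · rw [hxz']; exact hizero
      · intro j
        exact htailzero j

lemma mem_orth_span_iff (S : Set V) (x : V) :
    x ∈ (Submodule.span ℝ S)ᗮ ↔ ∀ s ∈ S, ⟪s, x⟫ = 0 := by
  rw [Submodule.mem_orthogonal]
  constructor
  · intro h s hs
    exact h s (Submodule.subset_span hs)
  · intro h u hu
    induction hu using Submodule.span_induction with
    | mem y hy => exact h y hy
    | zero => exact inner_zero_left x
    | add y z _ _ hy hz => rw [inner_add_left, hy, hz, add_zero]
    | smul a y _ hy => rw [real_inner_smul_left, hy, mul_zero]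

end CarterAux
open CarterAux in
/-- Carter's Lemma 3: `s_{α₁} ⋯ s_{α_k}` has Carter length exactly `k`
(it cannot be written as a product of fewer than `k` root reflections)
iff the roots `α₁, …, α_k` are linearly independent. -/
theorem carter_length_eq_iff_linearIndependent
    {V : Type*} [NormedAddCommGroup V] [InnerProductSpace ℝ V] [FiniteDimensional ℝ V]
    (Φ : Set V) (hΦ : IsRootSystem Φ) (k : ℕ) (α : Fin k → V) (hα : ∀ i, α i ∈ Φ) :
    (∀ (m : ℕ) (β : Fin m → V), (∀ i, β i ∈ Φ) →
        (List.ofFn fun i => sRefl (β i)).prod = (List.ofFn fun i => sRefl (α i)).prod →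
        k ≤ m)
      ↔ LinearIndependent ℝ α := by
  constructor
  · intro H
    by_contra hdep
    have hword : ∀ γ ∈ List.ofFn α, γ ∈ Φ := by
      intro γ hγ
      obtain ⟨i, rfl⟩ := List.mem_ofFn.mp hγ
      exact hα i
    have hfr : Set.finrank ℝ (Set.range α) ≠ k := fun h =>
      hdep (linearIndependent_iff_card_eq_finrank_span.mpr
        (by rw [Fintype.card_fin]; exact h.symm))
    have hfrle : Set.finrank ℝ (Set.range α) ≤ k := by
      simpa [Fintype.card_fin] using finrank_range_le_card (R := ℝ) α
    have hfrlt : Set.finrank ℝ (Set.range α) < k := lt_of_le_of_ne hfrle hfr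
    have horth : (Submodule.span ℝ (Set.range α))ᗮ ≤ fixSub (List.ofFn α) := by
      intro x hx
      rw [mem_fixSub]
      refine wp_fix_of_inner_zero ?_
      intro γ hγ
      obtain ⟨i, rfl⟩ := List.mem_ofFn.mp hγ
      have := (mem_orth_span_iff _ x).mp hx (α i) ⟨i, rfl⟩
      rw [real_inner_comm] at this
      exact this
    have h1 := Submodule.finrank_add_finrank_orthogonal (Submodule.span ℝ (Set.range α))
    have h2 : Module.finrank ℝ ((Submodule.span ℝ (Set.range α))ᗮ)
        ≤ Module.finrank ℝ (fixSub (List.ofFn α)) := Submodule.finrank_mono horth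
    have hsf : Set.finrank ℝ (Set.range α)
        = Module.finrank ℝ (Submodule.span ℝ (Set.range α)) := rfl
    have h3 : Module.finrank ℝ V ≤ (k-1) + Module.finrank ℝ (fixSub (List.ofFn α)) := by
      omega
    obtain ⟨L', hL', hw', hlen'⟩ := shorten hΦ (k-1) (List.ofFn α) hword h3
    have e1 : (List.ofFn fun i => sRefl (L'.get i)) = L'.map sRefl := by
      have h := (List.map_ofFn (f := L'.get) (g := sRefl)).symm
      rw [List.ofFn_get] at h
      exact h
    have e2 : (List.ofFn fun i => sRefl (α i)) = (List.ofFn α).map sRefl :=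
      (List.map_ofFn (f := α) (g := sRefl)).symm
    have hk := H L'.length (fun i => L'.get i)
      (fun i => hL' _ (List.get_mem L' i)) (by rw [e1, e2]; exact hw')
    omega
  · intro hind m β hβ heq
    have hwpeq : wp (List.ofFn β) = wp (List.ofFn α) := by
      show ((List.ofFn β).map sRefl).prod = ((List.ofFn α).map sRefl).prod
      rw [List.map_ofFn, List.map_ofFn]
      exact heq
    have hBA : (Submodule.span ℝ (Set.range β))ᗮ ≤ (Submodule.span ℝ (Set.range α))ᗮ := by
      intro x hx
      rw [mem_orth_span_iff] at hx ⊢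
      have hfixβ : wp (List.ofFn β) x = x := by
        refine wp_fix_of_inner_zero ?_
        intro γ hγ
        obtain ⟨i, rfl⟩ := List.mem_ofFn.mp hγ
        rw [real_inner_comm]
        exact hx (β i) ⟨i, rfl⟩
      have hfixα : wp (List.ofFn α) x = x := by rw [← hwpeq]; exact hfixβ
      have hz := fix_inner_zero_of_indep hind hfixα
      rintro s ⟨i, rfl⟩
      rw [real_inner_comm]
      exact hz i
    have h1 := Submodule.finrank_add_finrank_orthogonal (Submodule.span ℝ (Set.range β))
    have h2 := Submodule.finrank_add_finrank_orthogonal (Submodule.span ℝ (Set.range α))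
    have h3 : Module.finrank ℝ ((Submodule.span ℝ (Set.range β))ᗮ)
        ≤ Module.finrank ℝ ((Submodule.span ℝ (Set.range α))ᗮ) := by
      exact Submodule.finrank_mono hBA
    have h4 : Module.finrank ℝ (Submodule.span ℝ (Set.range α)) = k := by
      have h := finrank_span_eq_card (R := ℝ) hind
      rwa [Fintype.card_fin] at h
    have h5 : Module.finrank ℝ (Submodule.span ℝ (Set.range β)) ≤ m := by
      have h := finrank_range_le_card (R := ℝ) β
      rw [Fintype.card_fin] at h
      exact h
    omega
end
end

section
/- The 4×4 matrix w with rows (1,0,−1,−1), (0,1,1,−1), (1,−1,−1,0), (1,1,0,−1) has characteristic polynomial x⁴ + 2x² + 1, and the 4×4 matrix w_Ω with rows (0,1,0,0), (1,0,−1,−1), (0,0,0,1), (1,1,0,−1) has characteristic polynomial x⁴ + x³ + x + 1. In particular, w and w_Ω are not conjugate. -/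
set_option maxHeartbeats 1600000

open Polynomial

/-- The matrix of `w = s_{α₁}s_{α₂}s_{β₁}s_{β₂}` in the basis `{α₁, α₂, β₁, β₂}`. -/
def wMat : Matrix (Fin 4) (Fin 4) ℚ :=
  !![1, 0, -1, -1;
     0, 1,  1, -1;
     1, -1, -1, 0;
     1, 1,  0, -1]

/-- The matrix of `w_Ω = s_{α₁}s_{β₁}s_{α₂}s_{β₂}` in the basis `{α₁, α₂, β₁, β₂}`. -/
def wOmegaMat : Matrix (Fin 4) (Fin 4) ℚ :=
  !![0, 1, 0, 0;
     1, 0, -1, -1;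
     0, 0, 0, 1;
     1, 1, 0, -1]

/-- Conjugation by a unit preserves the characteristic polynomial. -/
lemma charpoly_conj (u M : Matrix (Fin 4) (Fin 4) ℚ) (hu : IsUnit u) :
    (u * M * u⁻¹).charpoly = M.charpoly := by
  have hud := (Matrix.isUnit_iff_isUnit_det u).mp hu
  have hui : u * u⁻¹ = 1 := Matrix.mul_nonsing_inv u hud
  have hmap : u.map C * (u⁻¹).map C = 1 := by
    rw [← Matrix.map_mul, hui, Matrix.map_one _ (map_zero C) (map_one C)]
  have hc : ∀ A : Matrix (Fin 4) (Fin 4) ℚ[X],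
      Matrix.scalar (Fin 4) X * A = A * Matrix.scalar (Fin 4) X :=
    fun A => Matrix.scalar_commute X (Commute.all X) A
  have h : Matrix.charmatrix (u * M * u⁻¹) =
      u.map C * Matrix.charmatrix M * (u⁻¹).map C := by
    rw [Matrix.charmatrix, Matrix.charmatrix]
    simp only [RingHom.mapMatrix_apply]
    rw [Matrix.mul_sub, Matrix.sub_mul]
    congr 1
    · rw [← hc, mul_assoc, hmap, mul_one]
    · rw [← Matrix.map_mul, ← Matrix.map_mul]
  rw [Matrix.charpoly, Matrix.charpoly, h, Matrix.det_mul, Matrix.det_mul]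
  have h1 : (u.map C).det * ((u⁻¹).map C).det = 1 := by
    rw [← Matrix.det_mul, hmap, Matrix.det_one]
  calc (u.map C).det * (Matrix.charmatrix M).det * ((u⁻¹).map C).det
      = (Matrix.charmatrix M).det * ((u.map C).det * ((u⁻¹).map C).det) := by ring
    _ = (Matrix.charmatrix M).det := by rw [h1, mul_one]

/-- `w` has characteristic polynomial `x⁴ + 2x² + 1`, `w_Ω` has characteristic polynomial
`x⁴ + x³ + x + 1`; in particular `w` and `w_Ω` are not conjugate. -/
theorem charpoly_w_wOmega_and_not_conjugate :
    wMat.charpoly = X ^ 4 + 2 * X ^ 2 + 1 ∧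
    wOmegaMat.charpoly = X ^ 4 + X ^ 3 + X + 1 ∧
    ¬ ∃ u : Matrix (Fin 4) (Fin 4) ℚ, IsUnit u ∧ wOmegaMat = u * wMat * u⁻¹ := by
  have e1 : wMat.charmatrix =
      !![X - 1, 0, 1, 1; 0, X - 1, -1, 1; -1, 1, X + 1, 0; -1, -1, 0, X + 1] := by
    ext i j
    fin_cases i <;> fin_cases j <;>
      simp [wMat, Matrix.charmatrix_apply, Matrix.diagonal_apply,
        Matrix.vecHead, Matrix.vecTail, map_one, map_zero, map_neg, map_ofNat]
  have e2 : wOmegaMat.charmatrix =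
      !![X, -1, 0, 0; -1, X, 1, 1; 0, 0, X, -1; -1, -1, 0, X + 1] := by
    ext i j
    fin_cases i <;> fin_cases j <;>
      simp [wOmegaMat, Matrix.charmatrix_apply, Matrix.diagonal_apply,
        Matrix.vecHead, Matrix.vecTail, map_one, map_zero, map_neg, map_ofNat]
  have h1 : wMat.charpoly = X ^ 4 + 2 * X ^ 2 + 1 := by
    rw [Matrix.charpoly, e1]
    simp [Matrix.det_succ_row_zero, Fin.sum_univ_succ, Fin.succAbove, Fin.castSucc,
      Fin.castAdd, Fin.castLE]
    ring
  have h2 : wOmegaMat.charpoly = X ^ 4 + X ^ 3 + X + 1 := by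
    rw [Matrix.charpoly, e2]
    simp [Matrix.det_succ_row_zero, Fin.sum_univ_succ, Fin.succAbove, Fin.castSucc,
      Fin.castAdd, Fin.castLE]
    ring
  refine ⟨h1, h2, ?_⟩
  rintro ⟨u, hu, heq⟩
  have h3 := charpoly_conj u wMat hu
  rw [← heq, h1, h2] at h3
  have := congrArg (fun p => Polynomial.coeff p 3) h3
  simp [coeff_one, coeff_X] at this
end

section
/- In a graph whose cycles each contain an odd number of dotted edges, there cannot exist three vertices α₁, α₂, α₃ and two non-adjacent vertices β, γ such that β and γ are each adjacent to all three α_i. -/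
open SimpleGraph

private lemma cycle4 {V : Type*} (G : SimpleGraph V) {b a1 g a2 : V}
    (h1 : G.Adj b a1) (h2 : G.Adj a1 g) (h3 : G.Adj g a2) (h4 : G.Adj a2 b)
    (hbg : b ≠ g) (ha : a1 ≠ a2) :
    (Walk.cons h1 (Walk.cons h2 (Walk.cons h3 h4.toWalk)) : G.Walk b b).IsCycle := by
  have hba1 := h1.ne
  have ha1g := h2.ne
  have hga2 := h3.ne
  have ha2b := h4.ne
  rw [Walk.isCycle_def]
  refine ⟨⟨?_⟩, ?_, ?_⟩
  · simp [Walk.edges, Sym2.eq_iff, List.nodup_cons]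
    aesop
  · simp
  · simp [Walk.support, List.nodup_cons]
    aesop

/-- In a graph in which every cycle contains an odd number of dotted edges, there cannot
exist three distinct vertices `α₁, α₂, α₃` and two non-adjacent vertices `β, γ` with `β`
and `γ` each adjacent to all three `α_i`. -/
theorem no_three_alpha_endpoints
    {V : Type*} [Fintype V] [DecidableEq V] (G : SimpleGraph V)
    (D : Set (Sym2 V)) [DecidablePred (· ∈ D)]
    (hodd : ∀ (v : V) (c : G.Walk v v), c.IsCycle →
        Odd (c.edges.countP fun e => decide (e ∈ D))) :
    ¬ ∃ (α : Fin 3 → V) (β γ : V),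
        Function.Injective α ∧ β ≠ γ ∧ ¬ G.Adj β γ ∧
        (∀ i, G.Adj β (α i)) ∧ (∀ i, G.Adj γ (α i)) := by
  rintro ⟨α, β, γ, hinj, hbg, -, hβ, hγ⟩
  have hne : ∀ i j : Fin 3, i ≠ j → α i ≠ α j := fun i j h => fun e => h (hinj e)
  -- helper for the count of a 4-cycle
  have key : ∀ i j : Fin 3, i ≠ j →
      Odd ((if s(β, α i) ∈ D then 1 else 0) + (if s(α i, γ) ∈ D then 1 else 0)
        + (if s(γ, α j) ∈ D then 1 else 0) + (if s(α j, β) ∈ D then 1 else 0)) := by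
    intro i j hij
    have hc := cycle4 G (hβ i) (hγ i).symm (hγ j) ((hβ j).symm) hbg (hne i j hij)
    have := hodd β _ hc
    simpa [Walk.edges, List.countP_cons, add_comm, add_left_comm, add_assoc,
      apply_ite (fun b : Bool => if b = true then 1 else 0)] using this
  have h01 := key 0 1 (by decide)
  have h02 := key 0 2 (by decide)
  have h12 := key 1 2 (by decide)
  have sym : ∀ x y : V, (if s(x,y) ∈ D then 1 else 0) = (if s(y,x) ∈ D then 1 else 0) := by
    intro x y; rw [Sym2.eq_swap]
  rw [Nat.odd_iff] at h01 h02 h12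
  rw [sym (α 0) γ, sym (α 1) β] at h01
  rw [sym (α 0) γ, sym (α 2) β] at h02
  rw [sym (α 1) γ, sym (α 2) β] at h12
  omega
end

section
/- In a graph whose cycles each contain an odd number of dotted edges, there cannot exist a 4-cycle {α₁, β₁, α₂, β₂} together with a vertex γ adjacent to all four vertices of the cycle. -/
open SimpleGraph

lemma triangle_cycle {V : Type*} {G : SimpleGraph V} {a b c : V}
    (hab : G.Adj a b) (hbc : G.Adj b c) (hca : G.Adj c a) :
    (Walk.cons hab (Walk.cons hbc (Walk.cons hca Walk.nil))).IsCycle := by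
  have h1 := hab.ne
  have h2 := hbc.ne
  have h3 := hca.ne
  simp [Walk.isCycle_def, Walk.isTrail_def, List.nodup_cons, Sym2.eq_iff]
  tauto

lemma square_cycle {V : Type*} {G : SimpleGraph V} {a b c d : V}
    (hab : G.Adj a b) (hbc : G.Adj b c) (hcd : G.Adj c d) (hda : G.Adj d a)
    (hac : a ≠ c) (hbd : b ≠ d) :
    (Walk.cons hab (Walk.cons hbc (Walk.cons hcd (Walk.cons hda Walk.nil)))).IsCycle := by
  have h1 := hab.ne
  have h2 := hbc.ne
  have h3 := hcd.ne
  have h4 := hda.ne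
  simp [Walk.isCycle_def, Walk.isTrail_def, List.nodup_cons, Sym2.eq_iff]
  tauto

/-- In a graph in which every cycle contains an odd number of dotted edges, there cannot
exist a 4-cycle `α₁, β₁, α₂, β₂` together with a vertex `γ` adjacent to all four of its
vertices. -/
theorem no_vertex_adjacent_to_square
    {V : Type*} [Fintype V] [DecidableEq V] (G : SimpleGraph V)
    (D : Set (Sym2 V)) [DecidablePred (· ∈ D)]
    (hodd : ∀ (v : V) (c : G.Walk v v), c.IsCycle →
        Odd (c.edges.countP fun e => decide (e ∈ D))) :
    ¬ ∃ (α₁ β₁ α₂ β₂ γ : V),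
        α₁ ≠ α₂ ∧ β₁ ≠ β₂ ∧
        G.Adj α₁ β₁ ∧ G.Adj β₁ α₂ ∧ G.Adj α₂ β₂ ∧ G.Adj β₂ α₁ ∧
        G.Adj γ α₁ ∧ G.Adj γ β₁ ∧ G.Adj γ α₂ ∧ G.Adj γ β₂ := by
  rintro ⟨α₁, β₁, α₂, β₂, γ, hαα, hββ, h12, h21, h34, h43, hg1, hg2, hg3, hg4⟩
  have T1 := hodd γ _ (triangle_cycle hg1 h12 hg2.symm)
  have T2 := hodd γ _ (triangle_cycle hg2 h21 hg3.symm)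
  have T3 := hodd γ _ (triangle_cycle hg3 h34 hg4.symm)
  have T4 := hodd γ _ (triangle_cycle hg4 h43 hg1.symm)
  have S := hodd α₁ _ (square_cycle h12 h21 h34 h43 hαα hββ)
  simp only [Walk.edges_cons, Walk.edges_nil, List.countP_cons, List.countP_nil,
    decide_eq_true_eq, Sym2.eq_swap] at T1 T2 T3 T4 S
  rw [Nat.odd_iff] at T1 T2 T3 T4 S
  omega
end
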